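/- arXiv:1405.1484 — 2 statements merged into one kernel-verified Lean document; each statement's English description precedes it below -/
import Mathlib

section
/- Let n ≥ 3 be a prime and let G be the graph of Construction 1. For each l ∈ [n], the subgraph of G² induced by P^l is isomorphic to the complete multipartite graph K_{n*n} with partite sets P_1^l, …, P_n^l; equivalently, two distinct vertices v_{k,j}^l and v_{k',j'}^l of P^l are adjacent in G² if and only if k ≠ k'. -/
open SimpleGraph

/-- Entry of the Latin square `L_i`:  `L_i(j,k) ≡ j + i·(k-1) (mod n)`, with
indices and entries taken in `ZMod n` (identifying `[n] = {1,…,n}` with `ZMod n`). -/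
def latinL (n : ℕ) (i j k : ZMod n) : ZMod n := j + i * (k - 1)

/-- The vertices of the graph `G` of Construction 1:
`pv k m l` is `v_{k,m}^l ∈ P`, `qv i j` is `w_{i,j} ∈ Q` (with `i ≠ 0`, i.e. `i ∈ [n-1]`),
`rv i j` is `u_{i,j} ∈ R`, and `sv m` is `s_m ∈ S`. -/
inductive Vert (n : ℕ) : Type
  | pv (k m l : ZMod n) : Vert n
  | qv (i : {x : ZMod n // x ≠ 0}) (j : ZMod n) : Vert n
  | rv (i : {x : ZMod n // x ≠ 0}) (j : ZMod n) : Vert n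
  | sv (m : ZMod n) : Vert n

/-- One-directional description of the edges of Construction 1:
`w_{i,j}` is adjacent to `v_{k, L_i(j,k)}^l` for all `k, l`;
`u_{i,j}` is adjacent to every vertex of `T_{l, L_i(j,l)}` for every `l`;
`s_m` is adjacent to every vertex of `T_{l,m}` for every `l`. -/
def rel {n : ℕ} : Vert n → Vert n → Prop
  | .qv i j, .pv k m _ => m = latinL n i.1 j k
  | .rv i j, .pv _ m l => m = latinL n i.1 j l
  | .sv m', .pv _ m _ => m = m'
  | _, _ => False

/-- The bipartite graph `G` of Construction 1. -/
def GraphG (n : ℕ) : SimpleGraph (Vert n) where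
  Adj x y := rel x y ∨ rel y x
  symm := ⟨fun _ _ h => h.symm⟩
  loopless := by constructor; intro x h; cases x <;> simp [rel] at h

/-- The square `G²` of a graph `G`: two distinct vertices are adjacent iff
their distance in `G` is at most 2 (i.e. they are adjacent or have a common neighbor). -/
def square {V : Type*} (G : SimpleGraph V) : SimpleGraph V where
  Adj x y := x ≠ y ∧ (G.Adj x y ∨ ∃ z, G.Adj x z ∧ G.Adj z y)
  symm := by
    constructor
    rintro x y ⟨hxy, h | ⟨z, h1, h2⟩⟩
    · exact ⟨hxy.symm, Or.inl h.symm⟩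
    · exact ⟨hxy.symm, Or.inr ⟨z, h2.symm, h1.symm⟩⟩
  loopless := ⟨fun x h => h.1 rfl⟩

/-- `P_k^l = {v_{k,1}^l, …, v_{k,n}^l}`. -/
def Pkl (n : ℕ) (k l : ZMod n) : Set (Vert n) := {x | ∃ m, x = Vert.pv k m l}

/-- `P^l = P_1^l ∪ ⋯ ∪ P_n^l`. -/
def PlSet (n : ℕ) (l : ZMod n) : Set (Vert n) := {x | ∃ k m, x = Vert.pv k m l}

/-- `P = P^1 ∪ ⋯ ∪ P^n`. -/
def Pset (n : ℕ) : Set (Vert n) := {x | ∃ k m l, x = Vert.pv k m l}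

/-- `T_{l,m} = {v_{1,m}^l, …, v_{n,m}^l}`. -/
def Tlm (n : ℕ) (l m : ZMod n) : Set (Vert n) := {x | ∃ k, x = Vert.pv k m l}

/-- `Q_i = {w_{i,1}, …, w_{i,n}}`. -/
def QiSet (n : ℕ) (i : {x : ZMod n // x ≠ 0}) : Set (Vert n) := {x | ∃ j, x = Vert.qv i j}

/-- `Q = Q_1 ∪ ⋯ ∪ Q_{n-1}`. -/
def Qset (n : ℕ) : Set (Vert n) := {x | ∃ i j, x = Vert.qv i j}

/-- `R_i = {u_{i,1}, …, u_{i,n}}`. -/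
def RiSet (n : ℕ) (i : {x : ZMod n // x ≠ 0}) : Set (Vert n) := {x | ∃ j, x = Vert.rv i j}

/-- `R = R_1 ∪ ⋯ ∪ R_{n-1}`. -/
def Rset (n : ℕ) : Set (Vert n) := {x | ∃ i j, x = Vert.rv i j}

/-- `S = {s_1, …, s_n}`. -/
def Sset (n : ℕ) : Set (Vert n) := {x | ∃ m, x = Vert.sv m}

/-- `G_l`, the subgraph of `G` induced by `P^l ∪ Q` (kept on the same vertex type:
all edges of `G` with both endpoints in `P^l ∪ Q`). -/
def Gl (n : ℕ) (l : ZMod n) : SimpleGraph (Vert n) where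
  Adj x y := (GraphG n).Adj x y ∧ x ∈ PlSet n l ∪ Qset n ∧ y ∈ PlSet n l ∪ Qset n
  symm := ⟨fun _ _ ⟨h, hx, hy⟩ => ⟨h.symm, hy, hx⟩⟩
  loopless := ⟨fun x h => (GraphG n).irrefl h.1⟩

/-- `G` is `k`-choosable: for every list assignment with all lists of size at least `k`
there is a proper coloring choosing each color from the corresponding list. -/
def Choosable {V : Type*} (G : SimpleGraph V) (k : ℕ) : Prop :=
  ∀ L : V → Finset ℕ, (∀ v, k ≤ (L v).card) →
    ∃ φ : V → ℕ, (∀ v, φ v ∈ L v) ∧ ∀ ⦃v w⦄, G.Adj v w → φ v ≠ φ w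

/-- The list chromatic number `χ_ℓ(G)`: the least `k` such that `G` is `k`-choosable. -/
noncomputable def listChromaticNumber {V : Type*} (G : SimpleGraph V) : ℕ :=
  sInf {k | Choosable G k}


/-- for each `l`, the subgraph of `G²` induced by `P^l` is isomorphic to
the complete multipartite graph `K_{n*n}` with partite sets `P_1^l, …, P_n^l`;
equivalently, `v_{k,j}^l` and `v_{k',j'}^l` are adjacent in `G²` iff `k ≠ k'`. -/
theorem stmt_11 (n : ℕ) (hn : n.Prime) (hn3 : 3 ≤ n) (l : ZMod n) :
    Nonempty ((square (GraphG n)).induce (PlSet n l) ≃g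
      completeMultipartiteGraph (fun _ : Fin n => Fin n)) ∧
    ∀ k j k' j' : ZMod n,
      ((square (GraphG n)).Adj (Vert.pv k j l) (Vert.pv k' j' l) ↔ k ≠ k') := by
  haveI : Fact n.Prime := ⟨hn⟩
  haveI : NeZero n := ⟨by omega⟩
  have key : ∀ k j k' j' : ZMod n,
      ((square (GraphG n)).Adj (Vert.pv k j l) (Vert.pv k' j' l) ↔ k ≠ k') := by
    intro k j k' j'
    constructor
    · rintro ⟨hne, h | ⟨z, h1, h2⟩⟩
      · simp [GraphG, rel] at h
      · intro hkk
        subst hkk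
        cases z with
        | pv a b c => simp [GraphG, rel] at h1
        | qv i j0 =>
            simp only [GraphG, rel, false_or, or_false] at h1 h2
            exact hne (by rw [h1, h2])
        | rv i j0 =>
            simp only [GraphG, rel, false_or, or_false] at h1 h2
            exact hne (by rw [h1, h2])
        | sv m =>
            simp only [GraphG, rel, false_or, or_false] at h1 h2
            exact hne (by rw [h1, h2])
    · intro hkk
      refine ⟨by simp [hkk], Or.inr ?_⟩
      by_cases hjj : j = j'
      · exact ⟨Vert.sv j, Or.inr rfl, Or.inl hjj.symm⟩
      · have hk : k - k' ≠ 0 := sub_ne_zero.mpr hkk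
        obtain ⟨i, hi, hik⟩ : ∃ i : ZMod n, i ≠ 0 ∧ i * (k - k') = j - j' :=
          ⟨(j - j') * (k - k')⁻¹,
           mul_ne_zero (sub_ne_zero.mpr hjj) (inv_ne_zero hk),
           by rw [mul_assoc, inv_mul_cancel₀ hk, mul_one]⟩
        refine ⟨Vert.qv ⟨i, hi⟩ (j - i * (k - 1)), Or.inr ?_, Or.inl ?_⟩
        · show j = latinL n i (j - i * (k - 1)) k
          unfold latinL; ring
        · show j' = latinL n i (j - i * (k - 1)) k'
          unfold latinL; linear_combination hik
  refine ⟨?_, key⟩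
  let e0 : ZMod n ≃ Fin n := Fintype.equivFinOfCardEq (ZMod.card n)
  let g : Vert n → (Σ _ : Fin n, Fin n) := fun x =>
    match x with
    | Vert.pv k m _ => ⟨e0 k, e0 m⟩
    | _ => ⟨e0 0, e0 0⟩
  refine ⟨{ toFun := fun x => g x.1
            invFun := fun p => ⟨Vert.pv (e0.symm p.1) (e0.symm p.2) l, ⟨_, _, rfl⟩⟩
            left_inv := ?_
            right_inv := ?_
            map_rel_iff' := ?_ }⟩
  · rintro ⟨x, k, m, rfl⟩
    simp [g]
  · rintro ⟨a, b⟩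
    simp [g]
  · rintro ⟨x, k, m, rfl⟩ ⟨y, k', m', rfl⟩
    show (completeMultipartiteGraph (fun _ : Fin n => Fin n)).Adj ⟨e0 k, e0 m⟩ ⟨e0 k', e0 m'⟩ ↔
        (square (GraphG n)).Adj (Vert.pv k m l) (Vert.pv k' m' l)
    rw [key k m k' m']
    exact not_congr e0.apply_eq_iff_eq
end

section
/- For integers n, r ≥ 2, the list chromatic number of the complete multipartite graph K_{n*r} satisfies χ_ℓ(K_{n*r}) > (n−1)·⌊(2r−1)/n⌋. -/
open SimpleGraph

lemma choosable_card {V : Type*} [Fintype V] (G : SimpleGraph V) :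
    ∀ L : V → Finset ℕ, (∀ v, Fintype.card V ≤ (L v).card) →
      ∃ φ : V → ℕ, (∀ v, φ v ∈ L v) ∧ ∀ ⦃v w⦄, G.Adj v w → φ v ≠ φ w := by
  classical
  intro L hL
  have hall : ∀ s : Finset V, s.card ≤ (s.biUnion L).card := by
    intro s
    rcases s.eq_empty_or_nonempty with rfl | ⟨x, hx⟩
    · simp
    · calc s.card ≤ Fintype.card V := s.card_le_univ
        _ ≤ (L x).card := hL x
        _ ≤ (s.biUnion L).card :=
          Finset.card_le_card (fun c hc => Finset.mem_biUnion.2 ⟨x, hx, hc⟩)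
  obtain ⟨f, hinj, hmem⟩ := (Finset.all_card_le_biUnion_card_iff_exists_injective L).1 hall
  exact ⟨f, hmem, fun v w hvw => fun h => G.ne_of_adj hvw (hinj h)⟩

lemma card_list (n k : ℕ) (hn : 2 ≤ n) (j : ℕ) :
    ((Finset.range (n * k)).filter (fun c => ¬ (c % n = (j + c / n) % n))).card
      = (n - 1) * k := by
  classical
  have hn0 : 0 < n := by omega
  have hfilter : ((Finset.range (n * k)).filter (fun c => c % n = (j + c / n) % n))
      = (Finset.range k).image (fun b => n * b + (j + b) % n) := by
    ext c
    simp only [Finset.mem_filter, Finset.mem_range, Finset.mem_image]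
    constructor
    · rintro ⟨hc, hmod⟩
      refine ⟨c / n, Nat.div_lt_of_lt_mul (by omega), ?_⟩
      rw [← hmod]
      have := Nat.div_add_mod c n
      omega
    · rintro ⟨b, hb, rfl⟩
      have hx : (j + b) % n < n := Nat.mod_lt _ hn0
      have hdiv : (n * b + (j + b) % n) / n = b := by
        rw [Nat.mul_add_div hn0, Nat.div_eq_of_lt hx]; omega
      have hmod : (n * b + (j + b) % n) % n = (j + b) % n := by
        rw [Nat.mul_add_mod]; exact Nat.mod_eq_of_lt hx
      constructor
      · have e2 : n * (b + 1) = n * b + n := by ring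
        have e3 : n * (b + 1) ≤ n * k := Nat.mul_le_mul_left n hb
        omega
      · rw [hmod, hdiv]
  have hinj : Set.InjOn (fun b => n * b + (j + b) % n) (Finset.range k) := by
    intro a ha b hb hab
    have h1 : (j + a) % n < n := Nat.mod_lt _ hn0
    have h2 : (j + b) % n < n := Nat.mod_lt _ hn0
    simp only at hab
    have ha' : (n * a + (j + a) % n) / n = a := by
      rw [Nat.mul_add_div hn0, Nat.div_eq_of_lt h1]; omega
    have hb' : (n * b + (j + b) % n) / n = b := by
      rw [Nat.mul_add_div hn0, Nat.div_eq_of_lt h2]; omega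
    have : a = (n * a + (j + a) % n) / n := ha'.symm
    rw [this, hab, hb']
  have hcardP : ((Finset.range (n * k)).filter (fun c => c % n = (j + c / n) % n)).card = k := by
    rw [hfilter, Finset.card_image_of_injOn hinj, Finset.card_range]
  rw [Finset.filter_not, Finset.card_sdiff_of_subset (Finset.filter_subset _ _), Finset.card_range,
    hcardP, Nat.sub_one_mul]

lemma not_choosable (n r : ℕ) (hn : 2 ≤ n) (hr : 2 ≤ r) :
    ¬ Choosable (completeMultipartiteGraph fun _ : Fin r => Fin n)
      ((n - 1) * ((2 * r - 1) / n)) := by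
  classical
  set k := (2 * r - 1) / n with hk
  have hn0 : 0 < n := by omega
  have hnk : n * k ≤ 2 * r - 1 := Nat.mul_div_le _ _
  intro hch
  set L : (Σ _ : Fin r, Fin n) → Finset ℕ :=
    fun v => (Finset.range (n * k)).filter
      (fun c => ¬ (c % n = (v.2.val + c / n) % n)) with hL
  obtain ⟨φ, hφmem, hφadj⟩ := hch L (fun v => le_of_eq (card_list n k hn v.2.val).symm)
  set S : Fin r → Finset ℕ := fun i => Finset.univ.image (fun j : Fin n => φ ⟨i, j⟩) with hS
  have hSsub : ∀ i, S i ⊆ Finset.range (n * k) := by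
    intro i c hc
    simp only [hS, Finset.mem_image] at hc
    obtain ⟨j, _, rfl⟩ := hc
    exact (Finset.mem_filter.1 (hφmem ⟨i, j⟩)).1
  have hSne : ∀ i, 1 ≤ (S i).card := by
    intro i
    have : φ ⟨i, ⟨0, by omega⟩⟩ ∈ S i := Finset.mem_image_of_mem _ (Finset.mem_univ _)
    exact Finset.card_pos.2 ⟨_, this⟩
  have hdisj : ∀ i i' : Fin r, i ≠ i' → Disjoint (S i) (S i') := by
    intro i i' hii'
    rw [Finset.disjoint_left]
    intro c hc hc'
    simp only [hS, Finset.mem_image] at hc hc'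
    obtain ⟨j, _, hj⟩ := hc
    obtain ⟨j', _, hj'⟩ := hc'
    have hadj : (completeMultipartiteGraph fun _ : Fin r => Fin n).Adj ⟨i, j⟩ ⟨i', j'⟩ := hii'
    exact hφadj hadj (by rw [hj, hj'])
  have hsum : ∑ i : Fin r, (S i).card ≤ n * k := by
    rw [← Finset.card_biUnion (fun i _ i' _ h => hdisj i i' h)]
    calc (Finset.univ.biUnion S).card ≤ (Finset.range (n * k)).card :=
          Finset.card_le_card (Finset.biUnion_subset.2 (fun i _ => hSsub i))
      _ = n * k := Finset.card_range _
  have hmono : ∃ i, (S i).card = 1 := by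
    by_contra h
    push_neg at h
    have h2 : ∀ i, 2 ≤ (S i).card := fun i => by
      have := hSne i; have := h i; omega
    have : 2 * r ≤ ∑ i : Fin r, (S i).card := by
      calc 2 * r = ∑ _i : Fin r, 2 := by simp [mul_comm]
        _ ≤ ∑ i : Fin r, (S i).card := Finset.sum_le_sum (fun i _ => h2 i)
    omega
  obtain ⟨i, hi⟩ := hmono
  obtain ⟨c, hc⟩ := Finset.card_eq_one.1 hi
  have hall : ∀ j : Fin n, φ ⟨i, j⟩ = c := by
    intro j
    have : φ ⟨i, j⟩ ∈ S i := Finset.mem_image_of_mem _ (Finset.mem_univ _)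
    rw [hc, Finset.mem_singleton] at this
    exact this
  set b := c / n with hb
  set m := c % n with hm
  have hmlt : m < n := Nat.mod_lt _ hn0
  set j : Fin n := ⟨(m + n - b % n) % n, Nat.mod_lt _ hn0⟩ with hj
  have hkey : (j.val + b) % n = m := by
    have h1 : b % n ≤ b := Nat.mod_le _ _
    have h2 : b % n < n := Nat.mod_lt _ hn0
    have h3 : m + n - b % n + b = m + n * (b / n + 1) := by
      have e1 := Nat.mod_add_div b n
      have e2 : n * (b / n + 1) = n * (b / n) + n := by ring
      omega
    calc (j.val + b) % n = ((m + n - b % n) % n + b) % n := rfl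
      _ = (m + n - b % n + b) % n := by rw [Nat.mod_add_mod]
      _ = (m + n * (b / n + 1)) % n := by rw [h3]
      _ = m % n := Nat.add_mul_mod_self_left m n (b / n + 1)
      _ = m := Nat.mod_eq_of_lt hmlt
  have hmem := hφmem ⟨i, j⟩
  rw [hall j] at hmem
  exact (Finset.mem_filter.1 hmem).2 hkey.symm


/-- for `n, r ≥ 2`, `χ_ℓ(K_{n*r}) > (n-1)·⌊(2r-1)/n⌋`. -/
theorem stmt_14 (n r : ℕ) (hn : 2 ≤ n) (hr : 2 ≤ r) :
    (n - 1) * ((2 * r - 1) / n) <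
      listChromaticNumber (completeMultipartiteGraph fun _ : Fin r => Fin n) := by
  have hnc := not_choosable n r hn hr
  have hne : Choosable (completeMultipartiteGraph fun _ : Fin r => Fin n)
      (Fintype.card ((_ : Fin r) × Fin n)) :=
    fun L hL => choosable_card _ L hL
  have hmem := Nat.sInf_mem (⟨_, hne⟩ : Set.Nonempty
    {k | Choosable (completeMultipartiteGraph fun _ : Fin r => Fin n) k})
  by_contra h
  push_neg at h
  exact hnc (fun L hL => hmem L (fun v => le_trans h (hL v)))
end
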